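/- Let 0 ≤ ε < 1 and let Ū ∈ ℝ^{p×k} satisfy (1 − ε)·‖y‖ ≤ ‖Ū y‖ ≤ (1 + ε)·‖y‖ for all y ∈ ℝ^k. Let U ∈ ℝ^{p×k} have orthonormal columns (Uᵀ U = I_k) with column space equal to the column space of Ū. Then ‖U Uᵀ − Ū Ūᵀ‖₂ ≤ 3ε, where ‖·‖₂ is the spectral (ℓ2 operator) norm. -/

import Mathlib

open Matrix
open scoped Matrix.Norms.L2Operator RealInnerProductSpace

-- helper: toEuclideanLin is multiplicative
lemma teLin_mul_apply {a b c : ℕ} (A : Matrix (Fin a) (Fin b) ℝ) (B : Matrix (Fin b) (Fin c) ℝ)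
    (x : EuclideanSpace ℝ (Fin c)) :
    Matrix.toEuclideanLin (A * B) x = Matrix.toEuclideanLin A (Matrix.toEuclideanLin B x) := by
  simp [Matrix.toEuclideanLin_apply, Matrix.mulVec_mulVec]

-- helper: adjoint relation over ℝ
lemma teLin_transpose_inner {a b : ℕ} (A : Matrix (Fin a) (Fin b) ℝ)
    (y : EuclideanSpace ℝ (Fin b)) (x : EuclideanSpace ℝ (Fin a)) :
    ⟪Matrix.toEuclideanLin A y, x⟫ = ⟪y, Matrix.toEuclideanLin Aᵀ x⟫ := by
  have h : Aᵀ = Aᴴ := by ext i j; simp [Matrix.conjTranspose_apply]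
  rw [h, Matrix.toEuclideanLin_conjTranspose_eq_adjoint, LinearMap.adjoint_inner_right]

-- helper: norm bound for symmetric maps from quadratic form bound
lemma norm_apply_le_of_quadform {n : ℕ}
    (T : EuclideanSpace ℝ (Fin n) →ₗ[ℝ] EuclideanSpace ℝ (Fin n))
    (hT : T.IsSymmetric) (c : ℝ) (hc : 0 ≤ c)
    (h : ∀ x : EuclideanSpace ℝ (Fin n), |⟪T x, x⟫| ≤ c * ‖x‖ ^ 2)
    (x : EuclideanSpace ℝ (Fin n)) : ‖T x‖ ≤ c * ‖x‖ := by
  have hn : Module.finrank ℝ (EuclideanSpace ℝ (Fin n)) = n := finrank_euclideanSpace_fin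
  set b := hT.eigenvectorBasis hn with hb
  set μ := hT.eigenvalues hn with hμdef
  have hμ : ∀ i, |μ i| ≤ c := by
    intro i
    have h1 := h (b i)
    have h2 : T (b i) = (μ i : ℝ) • b i := hT.apply_eigenvectorBasis hn i
    have h3 : ‖b i‖ = 1 := b.orthonormal.1 i
    rw [h2, real_inner_smul_left, real_inner_self_eq_norm_sq, h3] at h1
    simpa using h1
  have hrepr : ∀ i, b.repr (T x) i = μ i * b.repr x i := fun i =>
    hT.eigenvectorBasis_apply_self_apply hn x i
  have hTx : ‖T x‖ ^ 2 ≤ c ^ 2 * ‖x‖ ^ 2 := by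
    rw [← b.repr.norm_map (T x), ← b.repr.norm_map x]
    rw [EuclideanSpace.norm_eq (b.repr (T x)), EuclideanSpace.norm_eq (b.repr x)]
    rw [Real.sq_sqrt (by positivity), Real.sq_sqrt (by positivity)]
    rw [Finset.mul_sum]
    apply Finset.sum_le_sum
    intro i _
    rw [hrepr i]
    have := hμ i
    have h4 : ‖μ i * b.repr x i‖ ^ 2 = (μ i) ^ 2 * ‖b.repr x i‖ ^ 2 := by
      rw [norm_mul, mul_pow, Real.norm_eq_abs, sq_abs]
    rw [h4]
    have : (μ i) ^ 2 ≤ c ^ 2 := by nlinarith [abs_nonneg (μ i), abs_le.mp (hμ i)]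
    nlinarith [sq_nonneg (‖b.repr x i‖)]
  nlinarith [norm_nonneg (T x), norm_nonneg x, mul_nonneg hc (norm_nonneg x)]

set_option maxHeartbeats 2000000 in
theorem projection_close_to_near_isometry_gram
    {p k : ℕ} (ε : ℝ) (hε0 : 0 ≤ ε) (hε1 : ε < 1)
    (Ubar : Matrix (Fin p) (Fin k) ℝ)
    (hUbar : ∀ y : EuclideanSpace ℝ (Fin k),
      (1 - ε) * ‖y‖ ≤ ‖Matrix.toEuclideanLin Ubar y‖ ∧
        ‖Matrix.toEuclideanLin Ubar y‖ ≤ (1 + ε) * ‖y‖)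
    (U : Matrix (Fin p) (Fin k) ℝ) (hUorth : Uᵀ * U = 1)
    (hUcol : LinearMap.range (Matrix.toEuclideanLin U)
      = LinearMap.range (Matrix.toEuclideanLin Ubar)) :
    ‖U * Uᵀ - Ubar * Ubarᵀ‖ ≤ 3 * ε := by
  set TU := Matrix.toEuclideanLin U with hTU
  set TUt := Matrix.toEuclideanLin Uᵀ with hTUt
  set TB := Matrix.toEuclideanLin Ubar with hTB
  set TBt := Matrix.toEuclideanLin Ubarᵀ with hTBt
  have hid : ∀ y, TUt (TU y) = y := by
    intro y
    rw [hTUt, hTU, ← teLin_mul_apply, hUorth]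
    simp [Matrix.toEuclideanLin_apply, Matrix.one_mulVec]
  have hadjU : ∀ (a : EuclideanSpace ℝ (Fin k)) (x : EuclideanSpace ℝ (Fin p)),
      ⟪TU a, x⟫ = ⟪a, TUt x⟫ := fun a x => teLin_transpose_inner U a x
  have hadjB : ∀ (a : EuclideanSpace ℝ (Fin k)) (x : EuclideanSpace ℝ (Fin p)),
      ⟪TB a, x⟫ = ⟪a, TBt x⟫ := fun a x => teLin_transpose_inner Ubar a x
  -- U is an isometry
  have hnormU : ∀ y, ‖TU y‖ = ‖y‖ := by
    intro y
    have h1 : ⟪TU y, TU y⟫ = ⟪y, y⟫ := by rw [hadjU, hid]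
    rw [real_inner_self_eq_norm_sq, real_inner_self_eq_norm_sq] at h1
    calc ‖TU y‖ = Real.sqrt (‖TU y‖ ^ 2) := (Real.sqrt_sq (norm_nonneg _)).symm
      _ = Real.sqrt (‖y‖ ^ 2) := by rw [h1]
      _ = ‖y‖ := Real.sqrt_sq (norm_nonneg _)
  -- ‖Uᵀ x‖ ≤ ‖x‖
  have hUt_le : ∀ x, ‖TUt x‖ ≤ ‖x‖ := by
    intro x
    have h1 : ‖TUt x‖ ^ 2 = ⟪TU (TUt x), x⟫ := by
      rw [hadjU]; exact (real_inner_self_eq_norm_sq _).symm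
    have h2 : ⟪TU (TUt x), x⟫ ≤ ‖TU (TUt x)‖ * ‖x‖ := real_inner_le_norm _ _
    rw [hnormU] at h2
    rcases eq_or_lt_of_le (norm_nonneg (TUt x)) with h0 | h0
    · rw [← h0]; exact norm_nonneg x
    · have h3 : ‖TUt x‖ * ‖TUt x‖ ≤ ‖TUt x‖ * ‖x‖ := by nlinarith
      exact le_of_mul_le_mul_left h3 h0
  -- lower bound for vectors in the common column space
  have hlow : ∀ v : EuclideanSpace ℝ (Fin p), v ∈ LinearMap.range TU →
      (1 - ε) * ‖v‖ ≤ ‖TBt v‖ := by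
    intro v hv
    rw [hUcol] at hv
    obtain ⟨z, hz⟩ := hv
    have h1 : ⟪z, TBt v⟫ = ‖v‖ ^ 2 := by
      rw [← hadjB, hz, real_inner_self_eq_norm_sq]
    have h2 : ⟪z, TBt v⟫ ≤ ‖z‖ * ‖TBt v‖ := real_inner_le_norm _ _
    have h3 : (1 - ε) * ‖z‖ ≤ ‖v‖ := by rw [← hz]; exact (hUbar z).1
    rcases eq_or_lt_of_le (norm_nonneg v) with h0 | h0
    · rw [← h0, mul_zero]; exact norm_nonneg _
    · have h4 : ‖v‖ * ((1 - ε) * ‖v‖) ≤ ‖v‖ * ‖TBt v‖ := by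
        nlinarith [norm_nonneg (TBt v), norm_nonneg z]
      exact le_of_mul_le_mul_left h4 h0
  -- upper bound
  have hup : ∀ x : EuclideanSpace ℝ (Fin p), ‖TBt x‖ ≤ (1 + ε) * ‖x‖ := by
    intro x
    have h1 : ‖TBt x‖ ^ 2 = ⟪TB (TBt x), x⟫ := by
      rw [hadjB]; exact (real_inner_self_eq_norm_sq _).symm
    have h2 : ⟪TB (TBt x), x⟫ ≤ ‖TB (TBt x)‖ * ‖x‖ := real_inner_le_norm _ _
    have h3 : ‖TB (TBt x)‖ ≤ (1 + ε) * ‖TBt x‖ := (hUbar (TBt x)).2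
    rcases eq_or_lt_of_le (norm_nonneg (TBt x)) with h0 | h0
    · rw [← h0]; exact mul_nonneg (by linarith) (norm_nonneg x)
    · have h4 : ‖TBt x‖ * ‖TBt x‖ ≤ ‖TBt x‖ * ((1 + ε) * ‖x‖) := by
        nlinarith [norm_nonneg x]
      exact le_of_mul_le_mul_left h4 h0
  -- Ūᵀ kills the orthogonal complement of the column space
  have hproj : ∀ x : EuclideanSpace ℝ (Fin p), TBt x = TBt (TU (TUt x)) := by
    intro x
    set w := x - TU (TUt x) with hw
    have hworth : ∀ a : EuclideanSpace ℝ (Fin k), ⟪TU a, w⟫ = 0 := by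
      intro a
      rw [hadjU, hw, map_sub, hid, sub_self, inner_zero_right]
    have hTBtw : TBt w = 0 := by
      have h1 : ⟪TBt w, TBt w⟫ = ⟪TB (TBt w), w⟫ := (hadjB _ _).symm
      have h2 : TB (TBt w) ∈ LinearMap.range TU := by
        rw [hUcol]; exact ⟨TBt w, rfl⟩
      obtain ⟨a, ha⟩ := h2
      rw [← ha, hworth a] at h1
      exact inner_self_eq_zero.mp h1
    have h5 : TBt x - TBt (TU (TUt x)) = 0 := by rw [← map_sub, ← hw, hTBtw]
    exact sub_eq_zero.mp h5
  -- the difference operator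
  set S := Matrix.toEuclideanLin (U * Uᵀ - Ubar * Ubarᵀ) with hS
  have hSapp : ∀ x, S x = TU (TUt x) - TB (TBt x) := by
    intro x
    rw [hS, map_sub, LinearMap.sub_apply, teLin_mul_apply, teLin_mul_apply]
  -- quadratic form identity
  have hquadeq : ∀ x : EuclideanSpace ℝ (Fin p), ⟪S x, x⟫ = ‖TUt x‖ ^ 2 - ‖TBt x‖ ^ 2 := by
    intro x
    rw [hSapp, inner_sub_left, hadjU, hadjB,
      real_inner_self_eq_norm_sq, real_inner_self_eq_norm_sq]
  -- symmetry
  have hsym : S.IsSymmetric := by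
    intro x y
    have e1 : ⟪S x, y⟫ = ⟪TUt x, TUt y⟫ - ⟪TBt x, TBt y⟫ := by
      rw [hSapp, inner_sub_left, hadjU, hadjB]
    have e2 : ⟪S y, x⟫ = ⟪TUt y, TUt x⟫ - ⟪TBt y, TBt x⟫ := by
      rw [hSapp, inner_sub_left, hadjU, hadjB]
    have c1 : (⟪TUt x, TUt y⟫ : ℝ) = ⟪TUt y, TUt x⟫ := real_inner_comm _ _
    have c2 : (⟪TBt x, TBt y⟫ : ℝ) = ⟪TBt y, TBt x⟫ := real_inner_comm _ _
    have c3 : (⟪x, S y⟫ : ℝ) = ⟪S y, x⟫ := real_inner_comm _ _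
    linarith [e1, e2, c1, c2, c3]
  -- quadratic form bound
  have hquad : ∀ x : EuclideanSpace ℝ (Fin p), |⟪S x, x⟫| ≤ 3 * ε * ‖x‖ ^ 2 := by
    intro x
    rw [hquadeq]
    set v := TU (TUt x) with hv
    have hvnorm : ‖v‖ = ‖TUt x‖ := hnormU _
    have hvle : ‖v‖ ≤ ‖x‖ := by rw [hvnorm]; exact hUt_le x
    have hBx : ‖TBt x‖ = ‖TBt v‖ := by rw [hproj x]
    have hvm : v ∈ LinearMap.range TU := ⟨TUt x, rfl⟩
    have h1 : (1 - ε) * ‖v‖ ≤ ‖TBt v‖ := hlow v hvm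
    have h2 : ‖TBt v‖ ≤ (1 + ε) * ‖v‖ := hup v
    have ht0 : (0:ℝ) ≤ ‖TBt v‖ := norm_nonneg _
    have hv0 : (0:ℝ) ≤ ‖v‖ := norm_nonneg _
    have hx0 : (0:ℝ) ≤ ‖x‖ := norm_nonneg _
    have hlowsq : (1 - ε) ^ 2 * ‖v‖ ^ 2 ≤ ‖TBt v‖ ^ 2 := by
      nlinarith [mul_self_le_mul_self (mul_nonneg (by linarith) hv0 : (0:ℝ) ≤ (1 - ε) * ‖v‖) h1]
    have hupsq : ‖TBt v‖ ^ 2 ≤ (1 + ε) ^ 2 * ‖v‖ ^ 2 := by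
      nlinarith [mul_self_le_mul_self ht0 h2]
    have hvsq : ‖v‖ ^ 2 ≤ ‖x‖ ^ 2 := by nlinarith
    rw [← hvnorm, hBx, abs_le]
    constructor
    · nlinarith [sq_nonneg (‖v‖), mul_nonneg hε0 (sq_nonneg (‖v‖)), mul_le_mul_of_nonneg_left hvsq hε0,
        mul_nonneg (mul_nonneg hε0 hε0) (sq_nonneg (‖v‖))]
    · nlinarith [sq_nonneg (‖v‖), mul_nonneg hε0 (sq_nonneg (‖v‖)), mul_le_mul_of_nonneg_left hvsq hε0,
        mul_nonneg (mul_nonneg hε0 hε0) (sq_nonneg (‖v‖))]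
  -- conclude via the operator norm
  rw [Matrix.l2_opNorm_def]
  apply ContinuousLinearMap.opNorm_le_bound _ (by linarith)
  intro x
  exact norm_apply_le_of_quadform S hsym (3 * ε) (by linarith) hquad x
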